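/- Let S be an inverse semigroup in which every σ-class contains only finitely many maximal non-idempotent elements and every ascending chain of non-idempotent elements is bounded above, equipped with a proper length function l_S, and let l_G be a length function on G = S/σ such that balls { g : l_G(g) ≤ r } are finite. Then there exists a function φ : [0,∞) → [0,∞) such that l_S(s) ≤ φ(l_G(σ(s))) for all s ∈ S. -/

import Mathlib

open scoped NNReal

/-- If every σ-class of an inverse semigroup `S` has finitely many maximal
non-idempotent elements and every ascending chain of non-idempotents is bounded
above, then for a proper length function `l_S` on `S` and a length function `l_G`
with finite balls on the maximal group image `G`, there is a bounding function
`φ` with `l_S(s) ≤ φ(l_G(σ(s)))` for all `s`. -/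
theorem stmt18 {S G : Type*} [Semigroup S] [Group G] (inv : S → S)
    (hinv1 : ∀ s, s * inv s * s = s)
    (hinv2 : ∀ s, inv s * s * inv s = inv s)
    (huniq : ∀ s t, s * t * s = s → t * s * t = t → t = inv s)
    (σ : S → G) (hσmul : ∀ s t, σ (s * t) = σ s * σ t)
    (hσsur : Function.Surjective σ)
    (hσE : ∀ e : S, e * e = e → σ e = 1)
    (lS : S → ℝ≥0)
    (hlS0 : ∀ s, lS s = 0 ↔ s * s = s)
    (hlSinv : ∀ s, lS (inv s) = lS s)
    (hlSsub : ∀ s t, lS (s * t) ≤ lS s + lS t)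
    (hlSmono : ∀ s t : S, (∃ e : S, e * e = e ∧ s = t * e) → lS s ≤ lS t)
    (hlSproper : ∀ r : ℝ≥0, ∃ F : Finset S, ∀ s : S, 0 < lS s → lS s ≤ r →
      ∃ f ∈ F, ∃ e : S, e * e = e ∧ s = f * e)
    (lG : G → ℝ≥0) (hlGball : ∀ r : ℝ≥0, {g : G | lG g ≤ r}.Finite)
    (hmaxfin : ∀ g : G, {m : S | σ m = g ∧ m * m ≠ m ∧
      ∀ t : S, σ t = g → (∃ e : S, e * e = e ∧ m = t * e) → t * t ≠ t → t = m}.Finite)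
    (hchain : ∀ C : Set S, C.Nonempty → (∀ x ∈ C, x * x ≠ x) →
      IsChain (fun s t : S => ∃ e : S, e * e = e ∧ s = t * e) C →
      ∃ ub : S, ∀ x ∈ C, ∃ e : S, e * e = e ∧ x = ub * e) :
    ∃ φ : ℝ≥0 → ℝ≥0, ∀ s : S, lS s ≤ φ (lG (σ s)) := by
  classical
  -- inverse of an idempotent is itself
  have hinvid : ∀ e : S, e * e = e → inv e = e := fun e he =>
    (huniq e e (by rw [he, he]) (by rw [he, he])).symm
  -- product of idempotents is idempotent
  have hmulid : ∀ e f : S, e * e = e → f * f = f → (e * f) * (e * f) = e * f := by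
    intro e f he hf
    set x := inv (e * f) with hx
    have h1 : (e * f) * (f * x * e) * (e * f) = e * f := by
      calc (e * f) * (f * x * e) * (e * f)
          = e * (f * f) * x * (e * e) * f := by simp only [mul_assoc]
        _ = e * f * x * (e * f) := by rw [he, hf]; simp only [mul_assoc]
        _ = e * f := by rw [hinv1]
    have h2 : (f * x * e) * (e * f) * (f * x * e) = f * x * e := by
      calc (f * x * e) * (e * f) * (f * x * e)
          = f * (x * ((e * e) * (f * f) * (x * e))) := by simp only [mul_assoc]
        _ = f * (x * (e * f * (x * e))) := by rw [he, hf]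
        _ = f * ((x * (e * f) * x) * e) := by simp only [mul_assoc]
        _ = f * (x * e) := by rw [hx, hinv2]
        _ = f * x * e := by rw [mul_assoc]
    have hxfxe : f * x * e = x := huniq (e * f) (f * x * e) h1 h2
    have hxid : x * x = x := by
      conv_lhs => rw [← hxfxe]
      calc (f * x * e) * (f * x * e)
          = f * ((x * (e * f) * x) * e) := by simp only [mul_assoc]
        _ = f * (x * e) := by rw [hx, hinv2]
        _ = f * x * e := by rw [mul_assoc]
        _ = x := hxfxe
    -- e*f is an inverse of x, and x is its own unique inverse, so e*f = x
    have : e * f = inv x := huniq x (e * f) (hinv2 (e * f)) (hinv1 (e * f))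
    rw [hinvid x hxid] at this
    rw [this]; exact hxid
  -- idempotents commute
  have hcomm : ∀ e f : S, e * e = e → f * f = f → e * f = f * e := by
    intro e f he hf
    have hef := hmulid e f he hf
    have hfe := hmulid f e hf he
    have h1 : (e * f) * (f * e) * (e * f) = e * f := by
      calc (e * f) * (f * e) * (e * f)
          = e * ((f * f) * ((e * e) * f)) := by simp only [mul_assoc]
        _ = e * (f * (e * f)) := by rw [he, hf]
        _ = (e * f) * (e * f) := by simp only [mul_assoc]
        _ = e * f := hef
    have h2 : (f * e) * (e * f) * (f * e) = f * e := by
      calc (f * e) * (e * f) * (f * e)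
          = f * ((e * e) * ((f * f) * e)) := by simp only [mul_assoc]
        _ = f * (e * (f * e)) := by rw [he, hf]
        _ = (f * e) * (f * e) := by simp only [mul_assoc]
        _ = f * e := hfe
    have : f * e = inv (e * f) := huniq (e * f) (f * e) h1 h2
    rw [hinvid (e * f) hef] at this
    exact this.symm
  -- the natural order: a ≤ b iff a = b * e
  set r : S → S → Prop := fun a b => ∃ e : S, e * e = e ∧ a = b * e with hr
  have hrefl : ∀ s : S, r s s := by
    intro s
    refine ⟨inv s * s, ?_, ?_⟩
    · calc (inv s * s) * (inv s * s) = inv s * (s * inv s * s) := by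
            simp only [mul_assoc]
        _ = inv s * s := by rw [hinv1]
    · rw [← mul_assoc, hinv1]
  have htrans : ∀ a b c : S, r a b → r b c → r a c := by
    rintro a b c ⟨e, he, hae⟩ ⟨f, hf, hbf⟩
    exact ⟨f * e, hmulid f e hf he, by rw [hae, hbf, mul_assoc]⟩
  have hantisymm : ∀ a b : S, r a b → r b a → a = b := by
    rintro a b ⟨e, he, hae⟩ ⟨f, hf, hbf⟩
    -- a = b*e, b = a*f, so b = b*(e*f) and a = b*e = b*(e*f*e) = b*(e*f) = b
    have hbef : b = b * (e * f) := by
      conv_lhs => rw [hbf, hae]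
      rw [mul_assoc]
    calc a = b * e := hae
      _ = (b * (e * f)) * e := by rw [← hbef]
      _ = b * (e * (f * e)) := by simp only [mul_assoc]
      _ = b * (e * (e * f)) := by rw [hcomm e f he hf]
      _ = b * ((e * e) * f) := by simp only [mul_assoc]
      _ = b * (e * f) := by rw [he]
      _ = b := hbef.symm
  -- order respects σ
  have hσr : ∀ a b : S, r a b → σ a = σ b := by
    rintro a b ⟨e, he, hae⟩
    rw [hae, hσmul, hσE e he, mul_one]
  -- below an idempotent means idempotent
  have hdown : ∀ a b : S, r a b → b * b = b → a * a = a := by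
    rintro a b ⟨e, he, hae⟩ hb
    rw [hae]; exact hmulid b e hb he
  -- every non-idempotent lies below a maximal non-idempotent of its σ-class
  have hmax : ∀ s : S, s * s ≠ s → ∃ m : S, r s m ∧
      m ∈ {m : S | σ m = σ s ∧ m * m ≠ m ∧
        ∀ t : S, σ t = σ s → (∃ e : S, e * e = e ∧ m = t * e) → t * t ≠ t → t = m} := by
    intro s hs
    set P : Set S := {t : S | t * t ≠ t ∧ r s t} with hP
    have hsP : s ∈ P := ⟨hs, hrefl s⟩
    have key : ∃ m : {t // t ∈ P}, ∀ a : {t // t ∈ P},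
        r m.1 a.1 → r a.1 m.1 := by
      apply exists_maximal_of_chains_bounded
        (r := fun a b : {t // t ∈ P} => r a.1 b.1)
      · intro c hc
        rcases c.eq_empty_or_nonempty with rfl | ⟨⟨x0, hx0P⟩, hx0⟩
        · exact ⟨⟨s, hsP⟩, by simp⟩
        · set C : Set S := Subtype.val '' c with hC
          have hCne : C.Nonempty := ⟨x0, ⟨x0, hx0P⟩, hx0, rfl⟩
          have hCni : ∀ x ∈ C, x * x ≠ x := by
            rintro x ⟨⟨y, hyP⟩, hy, rfl⟩; exact hyP.1
          have hCchain : IsChain (fun a b : S => ∃ e : S, e * e = e ∧ a = b * e) C := by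
            rintro x ⟨⟨x', hx'⟩, hxc, rfl⟩ y ⟨⟨y', hy'⟩, hyc, rfl⟩ hne
            have := hc hxc hyc (by simpa using hne)
            exact this
          obtain ⟨ub, hub⟩ := hchain C hCne hCni hCchain
          have hx0ub : r x0 ub := hub x0 ⟨⟨x0, hx0P⟩, hx0, rfl⟩
          have hubni : ub * ub ≠ ub := fun h => hx0P.1 (hdown x0 ub hx0ub h)
          have hubP : ub ∈ P := ⟨hubni, htrans s x0 ub hx0P.2 hx0ub⟩
          exact ⟨⟨ub, hubP⟩, fun a ha => hub a.1 ⟨a, ha, rfl⟩⟩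
      · intro a b c hab hbc
        exact htrans _ _ _ hab hbc
    obtain ⟨⟨m, hmP⟩, hmmax⟩ := key
    refine ⟨m, hmP.2, (hσr s m hmP.2).symm, hmP.1, ?_⟩
    intro t ht hmt htni
    have htP : t ∈ P := ⟨htni, htrans s m t hmP.2 hmt⟩
    exact hantisymm t m (hmmax ⟨t, htP⟩ hmt) hmt
  -- define the bounding function
  refine ⟨fun ρ => ((hlGball ρ).toFinset).sup
    (fun g => ((hmaxfin g).toFinset).sup lS), ?_⟩
  intro s
  by_cases hs : s * s = s
  · rw [(hlS0 s).mpr hs]; exact zero_le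
  · obtain ⟨m, hsm, hm⟩ := hmax s hs
    have h1 : lS s ≤ lS m := hlSmono s m hsm
    have h2 : lS m ≤ ((hmaxfin (σ s)).toFinset).sup lS := by
      apply Finset.le_sup
      rw [Set.Finite.mem_toFinset]
      exact hm
    have h3 : ((hmaxfin (σ s)).toFinset).sup lS ≤
        ((hlGball (lG (σ s))).toFinset).sup
          (fun g => ((hmaxfin g).toFinset).sup lS) := by
      apply Finset.le_sup (f := fun g => ((hmaxfin g).toFinset).sup lS)
      rw [Set.Finite.mem_toFinset]
      exact Set.mem_setOf_eq ▸ le_refl _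
    exact h1.trans (h2.trans h3)
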